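/- The HGR maximal correlation with k features equals the sum of the top k singular values of B̃ = B − u₀v₀ᵀ: ρ^{(k)}(X,Y) = max over zero-mean, identity-covariance f : 𝒳 → ℝᵏ, g : 𝒴 → ℝᵏ of E[f(X)ᵀg(Y)] = Σ_{i=1}^k σᵢ(B̃), provided k ≤ min(|𝒳|,|𝒴|) − 1. -/

import Mathlib

open Finset

/-- Bessel's inequality, concrete sums version. -/
lemma bessel_sums {ι α : Type*} [Fintype ι] [DecidableEq ι] [Fintype α] (e : ι → α → ℝ)
    (hON : ∀ i j, (∑ x, e i x * e j x) = if i = j then 1 else 0) (w : α → ℝ) :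
    ∑ j, (∑ x, w x * e j x) ^ 2 ≤ ∑ x, (w x) ^ 2 := by
  have h0 : (0:ℝ) ≤ ∑ x, (w x - ∑ j, (∑ x', w x' * e j x') * e j x) ^ 2 :=
    Finset.sum_nonneg fun x _ => sq_nonneg _
  have h1 : ∑ x, w x * ∑ j, (∑ x', w x' * e j x') * e j x
      = ∑ j, (∑ x', w x' * e j x') ^ 2 := by
    simp_rw [Finset.mul_sum]
    rw [Finset.sum_comm]
    refine Finset.sum_congr rfl fun j _ => ?_
    rw [sq]
    calc ∑ x, w x * ((∑ x', w x' * e j x') * e j x)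
        = ∑ x, (∑ x', w x' * e j x') * (w x * e j x) :=
          Finset.sum_congr rfl fun x _ => by ring
      _ = (∑ x', w x' * e j x') * (∑ x, w x * e j x) := by rw [Finset.mul_sum]
  have h2 : ∑ x, (∑ j, (∑ x', w x' * e j x') * e j x) ^ 2
      = ∑ j, (∑ x', w x' * e j x') ^ 2 := by
    calc ∑ x, (∑ j, (∑ x', w x' * e j x') * e j x) ^ 2
        = ∑ x, ∑ j, ∑ j', ((∑ x', w x' * e j x') * e j x) * ((∑ x', w x' * e j' x') * e j' x) :=
          Finset.sum_congr rfl fun x _ => by rw [sq, Finset.sum_mul_sum]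
      _ = ∑ j, ∑ x, ∑ j', ((∑ x', w x' * e j x') * e j x) * ((∑ x', w x' * e j' x') * e j' x) :=
          Finset.sum_comm
      _ = ∑ j, ∑ j', ∑ x, ((∑ x', w x' * e j x') * e j x) * ((∑ x', w x' * e j' x') * e j' x) :=
          Finset.sum_congr rfl fun j _ => Finset.sum_comm
      _ = ∑ j, ∑ j', (∑ x', w x' * e j x') * (∑ x', w x' * e j' x') * ∑ x, e j x * e j' x := by
          refine Finset.sum_congr rfl fun j _ => Finset.sum_congr rfl fun j' _ => ?_
          rw [Finset.mul_sum]
          exact Finset.sum_congr rfl fun x _ => by ring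
      _ = ∑ j, (∑ x', w x' * e j x') ^ 2 := by
          refine Finset.sum_congr rfl fun j _ => ?_
          simp_rw [hON]
          rw [Finset.sum_eq_single j (fun j' _ hj' => by simp [Ne.symm hj']) (by simp)]
          simp [sq]
  have hexp : ∑ x, (w x - ∑ j, (∑ x', w x' * e j x') * e j x) ^ 2
      = ∑ x, (w x)^2 - ∑ j, (∑ x', w x' * e j x') ^ 2 := by
    have h3 : ∀ x, (w x - ∑ j, (∑ x', w x' * e j x') * e j x) ^ 2
        = (w x)^2 - 2 * (w x * ∑ j, (∑ x', w x' * e j x') * e j x)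
          + (∑ j, (∑ x', w x' * e j x') * e j x)^2 := fun x => by ring
    simp_rw [h3]
    rw [Finset.sum_add_distrib, Finset.sum_sub_distrib, ← Finset.mul_sum, h1, h2]
    ring
  rw [hexp] at h0
  linarith

lemma filter_lt_eq_map {N k : ℕ} (hkN : k ≤ N) :
    (univ.filter (fun i : Fin N => (i : ℕ) < k)) = univ.map (Fin.castLEEmb hkN) := by
  ext i
  simp only [mem_filter, mem_univ, true_and, mem_map, Fin.castLEEmb_apply]
  constructor
  · intro h; exact ⟨⟨i, h⟩, rfl⟩
  · rintro ⟨j, rfl⟩; exact j.isLt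

lemma sigma_sum_bound {N k : ℕ} (hkN : k ≤ N) (σ : Fin N → ℝ) (hσ0 : ∀ i, 0 ≤ σ i)
    (hmono : Antitone σ) (d : Fin N → ℝ) (hd0 : ∀ i, 0 ≤ d i) (hd1 : ∀ i, d i ≤ 1)
    (hdsum : ∑ i, d i ≤ (k : ℝ)) :
    ∑ i, σ i * d i ≤ ∑ i ∈ univ.filter (fun i : Fin N => (i : ℕ) < k), σ i := by
  rcases eq_or_lt_of_le hkN with h | hklt
  · have : (univ.filter (fun i : Fin N => (i : ℕ) < k)) = univ := by
      ext i
      simp only [mem_filter, mem_univ, true_and, iff_true]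
      exact lt_of_lt_of_le i.isLt h.ge
    rw [this]
    exact Finset.sum_le_sum fun i _ => by nlinarith [hσ0 i, hd0 i, hd1 i]
  · set m : Fin N := ⟨k, hklt⟩ with hm
    set S := univ.filter (fun i : Fin N => (i : ℕ) < k) with hS
    have hcard : ((S.card : ℕ) : ℝ) = k := by
      rw [hS, filter_lt_eq_map hkN, Finset.card_map, card_univ, Fintype.card_fin]
    have hsd := Finset.sum_sdiff (f := fun i => σ i * d i) (Finset.subset_univ S)
    have hsd2 := Finset.sum_sdiff (f := d) (Finset.subset_univ S)
    have hC : ∑ i ∈ univ \ S, σ i * d i ≤ σ m * ((k : ℝ) - ∑ i ∈ S, d i) := by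
      have h1 : ∑ i ∈ univ \ S, σ i * d i ≤ ∑ i ∈ univ \ S, σ m * d i := by
        refine Finset.sum_le_sum fun i hi => ?_
        simp only [hS, Finset.mem_sdiff, mem_filter, mem_univ, true_and, not_lt] at hi
        exact mul_le_mul_of_nonneg_right (hmono (by simpa [Fin.le_def, hm] using hi)) (hd0 i)
      have h2 : ∑ i ∈ univ \ S, d i ≤ (k:ℝ) - ∑ i ∈ S, d i := by linarith
      calc ∑ i ∈ univ \ S, σ i * d i ≤ ∑ i ∈ univ \ S, σ m * d i := h1
        _ = σ m * ∑ i ∈ univ \ S, d i := by rw [Finset.mul_sum]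
        _ ≤ σ m * ((k:ℝ) - ∑ i ∈ S, d i) := mul_le_mul_of_nonneg_left h2 (hσ0 m)
    have hfinal : ∑ i ∈ S, σ i * d i + σ m * ((k:ℝ) - ∑ i ∈ S, d i) ≤ ∑ i ∈ S, σ i := by
      have he : σ m * ((k:ℝ) - ∑ i ∈ S, d i) = ∑ i ∈ S, σ m * (1 - d i) := by
        rw [show ((k:ℝ) - ∑ i ∈ S, d i) = ∑ i ∈ S, (1 - d i) by
          rw [Finset.sum_sub_distrib]; simp [← hcard]]
        rw [Finset.mul_sum]
      rw [he, ← Finset.sum_add_distrib]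
      refine Finset.sum_le_sum fun i hi => ?_
      have hik : (i:ℕ) < k := by simpa [hS] using hi
      have hσmi : σ m ≤ σ i := hmono (by simp only [Fin.le_def, hm]; omega)
      nlinarith [hd0 i, hd1 i, hσ0 i]
    linarith
open Finset
open scoped RealInnerProductSpace

lemma extend_family {α : Type*} [Fintype α] {N m : ℕ} (hm : m ≤ N)
    (w₀ : α → ℝ) (w : Fin N → α → ℝ)
    (h00 : ∑ x, w₀ x * w₀ x = 1)
    (h0i : ∀ i : Fin N, (i : ℕ) < m → ∑ x, w₀ x * w i x = 0)
    (hON : ∀ i j, (∑ x, w i x * w j x) = if i = j then 1 else 0) :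
    m + 1 ≤ Fintype.card α ∧
      ∃ b : Fin (Fintype.card α) → α → ℝ,
        (∀ l1 l2, (∑ x, b l1 x * b l2 x) = if l1 = l2 then 1 else 0) ∧
        (∀ h0 : 0 < Fintype.card α, b ⟨0, h0⟩ = w₀) ∧
        (∀ (i : ℕ) (hi : i < m) (h : i + 1 < Fintype.card α),
          b ⟨i + 1, h⟩ = w ⟨i, lt_of_lt_of_le hi hm⟩) := by
  classical
  have hinner : ∀ a b : EuclideanSpace ℝ α, ⟪a, b⟫ = ∑ x, a x * b x := fun a b => by
    simp [PiLp.inner_apply, RCLike.inner_apply, starRingEnd_apply]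
    exact Finset.sum_congr rfl fun x _ => mul_comm _ _
  set W : Fin (m + 1) → EuclideanSpace ℝ α := fun l =>
    if h : (l : ℕ) = 0 then WithLp.toLp 2 (fun x => w₀ x)
    else WithLp.toLp 2 (fun x => w ⟨(l : ℕ) - 1, by have := l.isLt; omega⟩ x) with hW
  have hWinner : ∀ l1 l2 : Fin (m + 1), ⟪W l1, W l2⟫ = if l1 = l2 then 1 else 0 := by
    intro l1 l2
    rw [hinner]
    by_cases h1 : (l1 : ℕ) = 0 <;> by_cases h2 : (l2 : ℕ) = 0
    · have : l1 = l2 := Fin.ext (h1.trans h2.symm)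
      simp only [hW, dif_pos h1, dif_pos h2, this, if_pos rfl, WithLp.ofLp_toLp]
      exact h00
    · have hne : l1 ≠ l2 := fun h => h2 (h ▸ h1)
      simp only [hW, dif_pos h1, dif_neg h2, if_neg hne, WithLp.ofLp_toLp]
      exact h0i ⟨(l2 : ℕ) - 1, by have := l2.isLt; omega⟩
        (by simpa using (by have := l2.isLt; omega : (l2 : ℕ) - 1 < m))
    · have hne : l1 ≠ l2 := fun h => h1 (h ▸ h2)
      simp only [hW, dif_neg h1, dif_pos h2, if_neg hne, WithLp.ofLp_toLp]
      rw [show ∀ i : Fin N, ∑ x, w i x * w₀ x = ∑ x, w₀ x * w i x from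
        fun i => Finset.sum_congr rfl fun x _ => mul_comm _ _]
      exact h0i ⟨(l1 : ℕ) - 1, by have := l1.isLt; omega⟩
        (by simpa using (by have := l1.isLt; omega : (l1 : ℕ) - 1 < m))
    · simp only [hW, dif_neg h1, dif_neg h2, WithLp.ofLp_toLp]
      rw [hON]
      congr 1
      simp only [Fin.mk.injEq, Fin.ext_iff, eq_iff_iff]
      omega
  have hWon : Orthonormal ℝ W := orthonormal_iff_ite.2 hWinner
  have hm1 : m + 1 ≤ Fintype.card α := by
    have h2 := hWon.linearIndependent.fintype_card_le_finrank
    simpa [finrank_euclideanSpace] using h2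
  refine ⟨hm1, ?_⟩
  set vf : Fin (Fintype.card α) → EuclideanSpace ℝ α := fun l =>
    if h : (l : ℕ) ≤ m then W ⟨(l : ℕ), by omega⟩ else 0 with hvf
  have hre : Orthonormal ℝ (({l : Fin (Fintype.card α) | (l : ℕ) ≤ m}).restrict vf) := by
    rw [orthonormal_iff_ite]
    rintro ⟨l1, hl1⟩ ⟨l2, hl2⟩
    simp only [Set.mem_setOf_eq] at hl1 hl2
    change ⟪vf l1, vf l2⟫ = _
    simp only [Set.restrict_apply, hvf, dif_pos hl1, dif_pos hl2]
    rw [hWinner ⟨(l1 : ℕ), by omega⟩ ⟨(l2 : ℕ), by omega⟩]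
    congr 1
    simp only [Fin.mk.injEq, eq_iff_iff, Subtype.mk_eq_mk, Fin.ext_iff]
  obtain ⟨b, hb⟩ := hre.exists_orthonormalBasis_extension_of_card_eq
    (by simp [finrank_euclideanSpace])
  refine ⟨fun l x => b l x, ?_, ?_, ?_⟩
  · intro l1 l2
    have := orthonormal_iff_ite.1 b.orthonormal l1 l2
    rw [hinner] at this
    exact this
  · intro h0
    have h := hb ⟨0, h0⟩ (by simp [Set.mem_setOf_eq])
    funext x
    have hv0 : vf ⟨0, h0⟩ = fun x => w₀ x := by
      simp only [hvf, dif_pos (by simp : ((⟨0, h0⟩ : Fin (Fintype.card α)) : ℕ) ≤ m)]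
      simp only [hW, dif_pos rfl, WithLp.ofLp_toLp]
    show (b ⟨0, h0⟩ : EuclideanSpace ℝ α) x = w₀ x
    rw [h, hv0]
  · intro i hi h
    have hmem : ((⟨i + 1, h⟩ : Fin (Fintype.card α)) : ℕ) ≤ m := by simpa using hi
    have hh := hb ⟨i + 1, h⟩ hmem
    funext x
    have hvi : vf ⟨i + 1, h⟩ = fun x => w ⟨i, lt_of_lt_of_le hi hm⟩ x := by
      simp only [hvf, dif_pos hmem]
      simp only [hW, dif_neg (by simp : ¬((⟨i + 1, by omega⟩ : Fin (m + 1)) : ℕ) = 0), WithLp.ofLp_toLp]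
      congr 1
    show (b ⟨i + 1, h⟩ : EuclideanSpace ℝ α) x = w ⟨i, lt_of_lt_of_le hi hm⟩ x
    rw [hh, hvi]
open Matrix Finset
open scoped RealInnerProductSpace

lemma double_sum_mul {α β : Type*} [Fintype α] [Fintype β] (F : α → ℝ) (G : β → ℝ) :
    ∑ x, ∑ y, F x * G y = (∑ x, F x) * (∑ y, G y) :=
  (Finset.sum_mul_sum _ _ _ _).symm

lemma double_sum_mul_const {α β : Type*} [Fintype α] [Fintype β] (c : ℝ) (F : α → ℝ) (G : β → ℝ) :
    ∑ x, ∑ y, c * (F x * G y) = c * ((∑ x, F x) * (∑ y, G y)) := by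
  calc ∑ x, ∑ y, c * (F x * G y) = ∑ x, (c * F x) * ∑ y, G y := by
        refine Finset.sum_congr rfl fun x _ => ?_
        rw [Finset.mul_sum]
        exact Finset.sum_congr rfl fun y _ => by ring
    _ = (∑ x, c * F x) * ∑ y, G y := by rw [Finset.sum_mul]
    _ = c * ((∑ x, F x) * (∑ y, G y)) := by rw [← Finset.mul_sum]; ring

lemma kyfan_bound {k N : ℕ} (hkN : k ≤ N)
    (σ : Fin N → ℝ) (hσ0 : ∀ i, 0 ≤ σ i) (hσmono : Antitone σ)
    (A C : Fin N → Fin k → ℝ)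
    (hArow : ∀ i, ∑ j, (A i j) ^ 2 ≤ 1) (hAcol : ∀ j, ∑ i, (A i j) ^ 2 ≤ 1)
    (hCrow : ∀ i, ∑ j, (C i j) ^ 2 ≤ 1) (hCcol : ∀ j, ∑ i, (C i j) ^ 2 ≤ 1) :
    ∑ j, ∑ i, σ i * (A i j * C i j)
      ≤ ∑ i ∈ univ.filter (fun i : Fin N => (i : ℕ) < k), σ i := by
  have hcb : ∀ i, (∑ j, A i j * C i j) ^ 2 ≤ (∑ j, (A i j) ^ 2) * (∑ j, (C i j) ^ 2) :=
    fun i => Finset.sum_mul_sq_le_sq_mul_sq univ _ _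
  have hAnn : ∀ i, (0:ℝ) ≤ ∑ j, (A i j) ^ 2 := fun i => Finset.sum_nonneg fun j _ => sq_nonneg _
  have hCnn : ∀ i, (0:ℝ) ≤ ∑ j, (C i j) ^ 2 := fun i => Finset.sum_nonneg fun j _ => sq_nonneg _
  have hd1 : ∀ i, |∑ j, A i j * C i j| ≤ 1 := by
    intro i
    nlinarith [hcb i, hArow i, hCrow i, hAnn i, hCnn i, sq_abs (∑ j, A i j * C i j),
      abs_nonneg (∑ j, A i j * C i j)]
  have hper : ∀ i, |∑ j, A i j * C i j| ≤ ((∑ j, (A i j) ^ 2) + (∑ j, (C i j) ^ 2)) / 2 := by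
    intro i
    nlinarith [hcb i, hAnn i, hCnn i, sq_abs (∑ j, A i j * C i j),
      abs_nonneg (∑ j, A i j * C i j), sq_nonneg ((∑ j, (A i j) ^ 2) - (∑ j, (C i j) ^ 2))]
  have hA2 : ∑ i, ∑ j, (A i j) ^ 2 ≤ (k : ℝ) := by
    rw [Finset.sum_comm]
    calc ∑ j : Fin k, ∑ i, (A i j) ^ 2 ≤ ∑ _j : Fin k, (1:ℝ) :=
          Finset.sum_le_sum fun j _ => hAcol j
      _ = k := by simp
  have hC2 : ∑ i, ∑ j, (C i j) ^ 2 ≤ (k : ℝ) := by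
    rw [Finset.sum_comm]
    calc ∑ j : Fin k, ∑ i, (C i j) ^ 2 ≤ ∑ _j : Fin k, (1:ℝ) :=
          Finset.sum_le_sum fun j _ => hCcol j
      _ = k := by simp
  have hdsum : ∑ i, |∑ j, A i j * C i j| ≤ (k : ℝ) := by
    calc ∑ i, |∑ j, A i j * C i j|
        ≤ ∑ i, ((∑ j, (A i j) ^ 2) + (∑ j, (C i j) ^ 2)) / 2 :=
          Finset.sum_le_sum fun i _ => hper i
      _ = ((∑ i, ∑ j, (A i j) ^ 2) + (∑ i, ∑ j, (C i j) ^ 2)) / 2 := by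
          rw [← Finset.sum_div, ← Finset.sum_add_distrib]
      _ ≤ ((k : ℝ) + k) / 2 := by linarith
      _ = k := by ring
  calc ∑ j, ∑ i, σ i * (A i j * C i j)
      = ∑ i, ∑ j, σ i * (A i j * C i j) := Finset.sum_comm
    _ = ∑ i, σ i * ∑ j, A i j * C i j :=
        Finset.sum_congr rfl fun i _ => (Finset.mul_sum _ _ _).symm
    _ ≤ ∑ i, σ i * |∑ j, A i j * C i j| :=
        Finset.sum_le_sum fun i _ => mul_le_mul_of_nonneg_left (le_abs_self _) (hσ0 i)
    _ ≤ _ := sigma_sum_bound hkN σ hσ0 hσmono (fun i => |∑ j, A i j * C i j|)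
        (fun i => abs_nonneg _) hd1 hdsum

theorem hgr_k_eq_sum_top_singular_values
    {X Y : Type*} [Fintype X] [Fintype Y] {k N : ℕ}
    (p : X → Y → ℝ) (hp : ∀ x y, 0 ≤ p x y) (hsum : ∑ x, ∑ y, p x y = 1)
    (hX : ∀ x, 0 < ∑ y, p x y) (hY : ∀ y, 0 < ∑ x, p x y)
    (B : Matrix X Y ℝ)
    (hB : ∀ x y, B x y = p x y / (Real.sqrt (∑ y', p x y') * Real.sqrt (∑ x', p x' y)))
    (u₀ : X → ℝ) (hu : ∀ x, u₀ x = Real.sqrt (∑ y, p x y))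
    (v₀ : Y → ℝ) (hv : ∀ y, v₀ y = Real.sqrt (∑ x, p x y))
    (σ : Fin N → ℝ) (u : Fin N → X → ℝ) (v : Fin N → Y → ℝ)
    (hσ0 : ∀ i, 0 ≤ σ i) (hσmono : Antitone σ)
    (hON_u : ∀ i j, (∑ x, u i x * u j x) = if i = j then 1 else 0)
    (hON_v : ∀ i j, (∑ y, v i y * v j y) = if i = j then 1 else 0)
    (hSVD : B - vecMulVec u₀ v₀ = ∑ i, σ i • vecMulVec (u i) (v i))
    (hkN : k ≤ N)
    (hk : k ≤ min (Fintype.card X) (Fintype.card Y) - 1) :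
    IsGreatest {r : ℝ | ∃ f : X → Fin k → ℝ, ∃ g : Y → Fin k → ℝ,
        (∀ i, ∑ x, (∑ y, p x y) * f x i = 0) ∧
        (∀ i, ∑ y, (∑ x, p x y) * g y i = 0) ∧
        (∀ i j, (∑ x, (∑ y, p x y) * (f x i * f x j)) = if i = j then 1 else 0) ∧
        (∀ i j, (∑ y, (∑ x, p x y) * (g y i * g y j)) = if i = j then 1 else 0) ∧
        r = ∑ x, ∑ y, p x y * (∑ i, f x i * g y i)}
      (∑ i ∈ univ.filter (fun i : Fin N => (i : ℕ) < k), σ i) := by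
  classical
  have hu0pos : ∀ x, 0 < u₀ x := fun x => (hu x) ▸ Real.sqrt_pos.2 (hX x)
  have hv0pos : ∀ y, 0 < v₀ y := fun y => (hv y) ▸ Real.sqrt_pos.2 (hY y)
  have hu0sq : ∀ x, u₀ x * u₀ x = ∑ y, p x y := fun x => by
    rw [hu]; exact Real.mul_self_sqrt (le_of_lt (hX x))
  have hv0sq : ∀ y, v₀ y * v₀ y = ∑ x, p x y := fun y => by
    rw [hv]; exact Real.mul_self_sqrt (le_of_lt (hY y))
  have hu0norm : ∑ x, u₀ x * u₀ x = 1 := by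
    rw [Finset.sum_congr rfl fun x _ => hu0sq x]; exact hsum
  have hv0norm : ∑ y, v₀ y * v₀ y = 1 := by
    rw [Finset.sum_congr rfl fun y _ => hv0sq y, Finset.sum_comm]; exact hsum
  have hpB : ∀ x y, p x y = u₀ x * (v₀ y * B x y) := by
    intro x y
    have h : u₀ x * v₀ y ≠ 0 := ne_of_gt (mul_pos (hu0pos x) (hv0pos y))
    rw [hB x y, ← hu x, ← hv y, ← mul_assoc, mul_comm (u₀ x * v₀ y), div_mul_cancel₀ _ h]
  have hBsum : ∀ x y, B x y = u₀ x * v₀ y + ∑ i, σ i * (u i x * v i y) := by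
    intro x y
    have h := congrFun (congrFun hSVD x) y
    simp only [Matrix.sub_apply, Matrix.vecMulVec_apply, Matrix.sum_apply,
      Matrix.smul_apply, smul_eq_mul] at h
    linarith [h]
  -- B *ᵥ v₀ = u₀ and u₀ ᵥ* B = v₀
  have hBv0 : ∀ x, ∑ y, B x y * v₀ y = u₀ x := by
    intro x
    have h1 : ∀ y, B x y * v₀ y = p x y / u₀ x := fun y => by
      rw [hpB x y, mul_div_cancel_left₀ _ (ne_of_gt (hu0pos x))]; ring
    calc ∑ y, B x y * v₀ y = ∑ y, p x y / u₀ x := Finset.sum_congr rfl fun y _ => h1 y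
      _ = (∑ y, p x y) / u₀ x := by rw [Finset.sum_div]
      _ = u₀ x := by rw [hu x]; exact Real.div_sqrt
  have hu0B : ∀ y, ∑ x, u₀ x * B x y = v₀ y := by
    intro y
    have h1 : ∀ x, u₀ x * B x y = p x y / v₀ y := fun x => by
      rw [hpB x y, show u₀ x * (v₀ y * B x y) = v₀ y * (u₀ x * B x y) from by ring,
        mul_div_cancel_left₀ _ (ne_of_gt (hv0pos y))]
    calc ∑ x, u₀ x * B x y = ∑ x, p x y / v₀ y := Finset.sum_congr rfl fun x _ => h1 x
      _ = (∑ x, p x y) / v₀ y := by rw [Finset.sum_div]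
      _ = v₀ y := by rw [hv y]; exact Real.div_sqrt
  -- orthogonality of singular vectors to u₀, v₀ when σ i ≠ 0
  have hvd : ∀ i, σ i ≠ 0 → ∑ y, v₀ y * v i y = 0 := by
    intro i hi
    have key : ∀ x, ∑ i', σ i' * ((∑ y, v₀ y * v i' y) * u i' x) = 0 := by
      intro x
      have h1 : ∑ y, (B x y - u₀ x * v₀ y) * v₀ y = 0 := by
        have e : ∑ y, (B x y - u₀ x * v₀ y) * v₀ y
            = (∑ y, B x y * v₀ y) - u₀ x * ∑ y, v₀ y * v₀ y := by
          rw [Finset.mul_sum, ← Finset.sum_sub_distrib]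
          exact Finset.sum_congr rfl fun y _ => by ring
        rw [e, hBv0 x, hv0norm]; ring
      have h2 : ∑ y, (B x y - u₀ x * v₀ y) * v₀ y
          = ∑ i', σ i' * ((∑ y, v₀ y * v i' y) * u i' x) := by
        have hpt : ∀ y, (B x y - u₀ x * v₀ y) * v₀ y
            = ∑ i', σ i' * (u i' x * v i' y) * v₀ y := fun y => by
          rw [hBsum x y, add_sub_cancel_left, Finset.sum_mul]
        calc ∑ y, (B x y - u₀ x * v₀ y) * v₀ y
            = ∑ y, ∑ i', σ i' * (u i' x * v i' y) * v₀ y :=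
              Finset.sum_congr rfl fun y _ => hpt y
          _ = ∑ i', ∑ y, σ i' * (u i' x * v i' y) * v₀ y := Finset.sum_comm
          _ = ∑ i', σ i' * ((∑ y, v₀ y * v i' y) * u i' x) := by
              refine Finset.sum_congr rfl fun i' _ => ?_
              calc ∑ y, σ i' * (u i' x * v i' y) * v₀ y
                  = ∑ y, (σ i' * u i' x) * (v₀ y * v i' y) :=
                    Finset.sum_congr rfl fun y _ => by ring
                _ = (σ i' * u i' x) * ∑ y, v₀ y * v i' y := by rw [← Finset.mul_sum]
                _ = σ i' * ((∑ y, v₀ y * v i' y) * u i' x) := by ring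
      rw [← h2]; exact h1
    have h3 : ∑ x, (∑ i', σ i' * ((∑ y, v₀ y * v i' y) * u i' x)) * u i x = 0 :=
      Finset.sum_eq_zero fun x _ => by rw [key x, zero_mul]
    have h4 : ∑ x, (∑ i', σ i' * ((∑ y, v₀ y * v i' y) * u i' x)) * u i x
        = σ i * (∑ y, v₀ y * v i y) := by
      calc ∑ x, (∑ i', σ i' * ((∑ y, v₀ y * v i' y) * u i' x)) * u i x
          = ∑ x, ∑ i', σ i' * ((∑ y, v₀ y * v i' y) * u i' x) * u i x := by
            refine Finset.sum_congr rfl fun x _ => ?_; rw [Finset.sum_mul]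
        _ = ∑ i', ∑ x, σ i' * ((∑ y, v₀ y * v i' y) * u i' x) * u i x := Finset.sum_comm
        _ = ∑ i', σ i' * (∑ y, v₀ y * v i' y) * ∑ x, u i' x * u i x := by
            refine Finset.sum_congr rfl fun i' _ => ?_
            rw [Finset.mul_sum]
            exact Finset.sum_congr rfl fun x _ => by ring
        _ = σ i * (∑ y, v₀ y * v i y) := by
            rw [Finset.sum_eq_single i (fun i' _ hne => by rw [hON_u i' i, if_neg hne]; ring)
              (fun h => absurd (Finset.mem_univ i) h)]
            rw [hON_u i i, if_pos rfl]; ring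
    have := h4 ▸ h3
    rcases mul_eq_zero.1 this with h | h
    · exact absurd h hi
    · exact h
  have hud : ∀ i, σ i ≠ 0 → ∑ x, u₀ x * u i x = 0 := by
    intro i hi
    have key : ∀ y, ∑ i', σ i' * ((∑ x, u₀ x * u i' x) * v i' y) = 0 := by
      intro y
      have h1 : ∑ x, (B x y - u₀ x * v₀ y) * u₀ x = 0 := by
        have e : ∑ x, (B x y - u₀ x * v₀ y) * u₀ x
            = (∑ x, u₀ x * B x y) - v₀ y * ∑ x, u₀ x * u₀ x := by
          rw [Finset.mul_sum, ← Finset.sum_sub_distrib]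
          exact Finset.sum_congr rfl fun x _ => by ring
        rw [e, hu0B y, hu0norm]; ring
      have h2 : ∑ x, (B x y - u₀ x * v₀ y) * u₀ x
          = ∑ i', σ i' * ((∑ x, u₀ x * u i' x) * v i' y) := by
        have hpt : ∀ x, (B x y - u₀ x * v₀ y) * u₀ x
            = ∑ i', σ i' * (u i' x * v i' y) * u₀ x := fun x => by
          rw [hBsum x y, add_sub_cancel_left, Finset.sum_mul]
        calc ∑ x, (B x y - u₀ x * v₀ y) * u₀ x
            = ∑ x, ∑ i', σ i' * (u i' x * v i' y) * u₀ x :=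
              Finset.sum_congr rfl fun x _ => hpt x
          _ = ∑ i', ∑ x, σ i' * (u i' x * v i' y) * u₀ x := Finset.sum_comm
          _ = ∑ i', σ i' * ((∑ x, u₀ x * u i' x) * v i' y) := by
              refine Finset.sum_congr rfl fun i' _ => ?_
              calc ∑ x, σ i' * (u i' x * v i' y) * u₀ x
                  = ∑ x, (σ i' * v i' y) * (u₀ x * u i' x) :=
                    Finset.sum_congr rfl fun x _ => by ring
                _ = (σ i' * v i' y) * ∑ x, u₀ x * u i' x := by rw [← Finset.mul_sum]
                _ = σ i' * ((∑ x, u₀ x * u i' x) * v i' y) := by ring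
      rw [← h2]; exact h1
    have h3 : ∑ y, (∑ i', σ i' * ((∑ x, u₀ x * u i' x) * v i' y)) * v i y = 0 :=
      Finset.sum_eq_zero fun y _ => by rw [key y, zero_mul]
    have h4 : ∑ y, (∑ i', σ i' * ((∑ x, u₀ x * u i' x) * v i' y)) * v i y
        = σ i * (∑ x, u₀ x * u i x) := by
      calc ∑ y, (∑ i', σ i' * ((∑ x, u₀ x * u i' x) * v i' y)) * v i y
          = ∑ y, ∑ i', σ i' * ((∑ x, u₀ x * u i' x) * v i' y) * v i y := by
            refine Finset.sum_congr rfl fun y _ => ?_; rw [Finset.sum_mul]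
        _ = ∑ i', ∑ y, σ i' * ((∑ x, u₀ x * u i' x) * v i' y) * v i y := Finset.sum_comm
        _ = ∑ i', σ i' * (∑ x, u₀ x * u i' x) * ∑ y, v i' y * v i y := by
            refine Finset.sum_congr rfl fun i' _ => ?_
            rw [Finset.mul_sum]
            exact Finset.sum_congr rfl fun y _ => by ring
        _ = σ i * (∑ x, u₀ x * u i x) := by
            rw [Finset.sum_eq_single i (fun i' _ hne => by rw [hON_v i' i, if_neg hne]; ring)
              (fun h => absurd (Finset.mem_univ i) h)]
            rw [hON_v i i, if_pos rfl]; ring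
    have := h4 ▸ h3
    rcases mul_eq_zero.1 this with h | h
    · exact absurd h hi
    · exact h
  -- the core identity
  have core : ∀ (f : X → Fin k → ℝ) (g : Y → Fin k → ℝ),
      (∀ i, ∑ x, (∑ y, p x y) * f x i = 0) →
      (∀ i, ∑ y, (∑ x, p x y) * g y i = 0) →
      ∑ x, ∑ y, p x y * (∑ i, f x i * g y i)
        = ∑ j : Fin k, ∑ i : Fin N,
            σ i * ((∑ x, u i x * (u₀ x * f x j)) * (∑ y, v i y * (v₀ y * g y j))) := by
    intro f g hf hg
    have hmf : ∀ j, ∑ x, (u₀ x * f x j) * u₀ x = 0 := fun j => by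
      rw [← hf j]
      exact Finset.sum_congr rfl fun x _ => by rw [← hu0sq x]; ring
    have hmg : ∀ j, ∑ y, (v₀ y * g y j) * v₀ y = 0 := fun j => by
      rw [← hg j]
      exact Finset.sum_congr rfl fun y _ => by rw [← hv0sq y]; ring
    calc ∑ x, ∑ y, p x y * (∑ i, f x i * g y i)
        = ∑ x, ∑ y, ∑ j, (u₀ x * f x j) * ((v₀ y * g y j) * B x y) := by
          refine Finset.sum_congr rfl fun x _ => Finset.sum_congr rfl fun y _ => ?_
          rw [Finset.mul_sum]
          exact Finset.sum_congr rfl fun j _ => by rw [hpB x y]; ring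
      _ = ∑ x, ∑ j, ∑ y, (u₀ x * f x j) * ((v₀ y * g y j) * B x y) :=
          Finset.sum_congr rfl fun x _ => Finset.sum_comm
      _ = ∑ j, ∑ x, ∑ y, (u₀ x * f x j) * ((v₀ y * g y j) * B x y) := Finset.sum_comm
      _ = ∑ j : Fin k, ∑ i : Fin N,
            σ i * ((∑ x, u i x * (u₀ x * f x j)) * (∑ y, v i y * (v₀ y * g y j))) := by
          refine Finset.sum_congr rfl fun j _ => ?_
          calc ∑ x, ∑ y, (u₀ x * f x j) * ((v₀ y * g y j) * B x y)
              = ∑ x, ∑ y, (((u₀ x * f x j) * u₀ x) * ((v₀ y * g y j) * v₀ y)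
                + ∑ i, σ i * ((u i x * (u₀ x * f x j)) * (v i y * (v₀ y * g y j)))) := by
                refine Finset.sum_congr rfl fun x _ => Finset.sum_congr rfl fun y _ => ?_
                rw [hBsum x y, mul_add, mul_add, Finset.mul_sum, Finset.mul_sum]
                congr 1
                · ring
                · exact Finset.sum_congr rfl fun i _ => by ring
            _ = (∑ x, ∑ y, ((u₀ x * f x j) * u₀ x) * ((v₀ y * g y j) * v₀ y))
                + ∑ x, ∑ y, ∑ i, σ i * ((u i x * (u₀ x * f x j)) * (v i y * (v₀ y * g y j))) := by
                rw [← Finset.sum_add_distrib]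
                exact Finset.sum_congr rfl fun x _ => by rw [← Finset.sum_add_distrib]
            _ = ∑ i, σ i * ((∑ x, u i x * (u₀ x * f x j)) * (∑ y, v i y * (v₀ y * g y j))) := by
                rw [double_sum_mul (fun x => (u₀ x * f x j) * u₀ x) (fun y => (v₀ y * g y j) * v₀ y),
                  hmf j, zero_mul, zero_add]
                calc ∑ x, ∑ y, ∑ i, σ i * ((u i x * (u₀ x * f x j)) * (v i y * (v₀ y * g y j)))
                    = ∑ x, ∑ i, ∑ y, σ i * ((u i x * (u₀ x * f x j)) * (v i y * (v₀ y * g y j))) :=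
                      Finset.sum_congr rfl fun x _ => Finset.sum_comm
                  _ = ∑ i, ∑ x, ∑ y, σ i * ((u i x * (u₀ x * f x j)) * (v i y * (v₀ y * g y j))) :=
                      Finset.sum_comm
                  _ = ∑ i, σ i * ((∑ x, u i x * (u₀ x * f x j)) * (∑ y, v i y * (v₀ y * g y j))) :=
                      Finset.sum_congr rfl fun i _ =>
                        double_sum_mul_const (σ i) (fun x => u i x * (u₀ x * f x j))
                          (fun y => v i y * (v₀ y * g y j))
  constructor
  · -- membership: construct the optimal features
    have hXne : Nonempty X := by
      by_contra h
      rw [not_nonempty_iff] at h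
      rw [Finset.univ_eq_empty, Finset.sum_empty] at hsum
      exact one_ne_zero hsum.symm
    have hYne : Nonempty Y := by
      by_contra h
      rw [not_nonempty_iff] at h
      have hz : ∑ x : X, ∑ y : Y, p x y = 0 := Finset.sum_eq_zero fun x _ => by
        rw [Finset.univ_eq_empty, Finset.sum_empty]
      rw [hz] at hsum
      exact one_ne_zero hsum.symm
    have hkX : k + 1 ≤ Fintype.card X := by
      have h1 : k ≤ Fintype.card X - 1 := le_trans hk (Nat.sub_le_sub_right (min_le_left _ _) 1)
      have h2 : 0 < Fintype.card X := Fintype.card_pos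
      omega
    have hkY : k + 1 ≤ Fintype.card Y := by
      have h1 : k ≤ Fintype.card Y - 1 := le_trans hk (Nat.sub_le_sub_right (min_le_right _ _) 1)
      have h2 : 0 < Fintype.card Y := Fintype.card_pos
      omega
    have hPN : ∃ n, ∀ i : Fin N, n ≤ (i : ℕ) → σ i = 0 :=
      ⟨N, fun i h => absurd i.isLt (not_lt.2 h)⟩
    set m := Nat.find hPN with hmdef
    have hm_zero : ∀ i : Fin N, m ≤ (i : ℕ) → σ i = 0 := Nat.find_spec hPN
    have hmN : m ≤ N := Nat.find_le fun i h => absurd i.isLt (not_lt.2 h)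
    have hm_pos : ∀ i : Fin N, (i : ℕ) < m → σ i ≠ 0 := by
      intro i hi hzero
      refine Nat.find_min hPN hi ?_
      intro j hj
      have hij : i ≤ j := by rw [Fin.le_def]; exact hj
      exact le_antisymm (hzero ▸ hσmono hij) (hσ0 j)
    obtain ⟨hmX, bX, hbXon, hbX0, hbXi⟩ :=
      extend_family hmN u₀ u hu0norm (fun i hi => hud i (hm_pos i hi)) hON_u
    obtain ⟨hmY, bY, hbYon, hbY0, hbYi⟩ :=
      extend_family hmN v₀ v hv0norm (fun i hi => hvd i (hm_pos i hi)) hON_v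
    have hjX : ∀ j : Fin k, (j : ℕ) + 1 < Fintype.card X := fun j => by
      have := j.isLt; omega
    have hjY : ∀ j : Fin k, (j : ℕ) + 1 < Fintype.card Y := fun j => by
      have := j.isLt; omega
    set Φ : Fin k → X → ℝ := fun j => bX ⟨(j : ℕ) + 1, hjX j⟩ with hΦ
    set Ψ : Fin k → Y → ℝ := fun j => bY ⟨(j : ℕ) + 1, hjY j⟩ with hΨ
    have hcX : ∀ x j, u₀ x * (Φ j x / u₀ x) = Φ j x := fun x j => by
      rw [mul_comm, div_mul_cancel₀ _ (ne_of_gt (hu0pos x))]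
    have hcY : ∀ y j, v₀ y * (Ψ j y / v₀ y) = Ψ j y := fun y j => by
      rw [mul_comm, div_mul_cancel₀ _ (ne_of_gt (hv0pos y))]
    have h0X : (0 : ℕ) < Fintype.card X := by omega
    have h0Y : (0 : ℕ) < Fintype.card Y := by omega
    have hΦ0 : ∀ j, ∑ x, u₀ x * Φ j x = 0 := by
      intro j
      rw [← hbX0 h0X]
      simp only [hΦ]
      rw [hbXon ⟨0, h0X⟩ ⟨(j : ℕ) + 1, hjX j⟩]
      rw [if_neg (by simp only [Fin.ext_iff]; omega)]
    have hΨ0 : ∀ j, ∑ y, v₀ y * Ψ j y = 0 := by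
      intro j
      rw [← hbY0 h0Y]
      simp only [hΨ]
      rw [hbYon ⟨0, h0Y⟩ ⟨(j : ℕ) + 1, hjY j⟩]
      rw [if_neg (by simp only [Fin.ext_iff]; omega)]
    have hΦON : ∀ i j, ∑ x, Φ i x * Φ j x = if i = j then 1 else 0 := by
      intro i j
      simp only [hΦ]
      rw [hbXon ⟨(i : ℕ) + 1, hjX i⟩ ⟨(j : ℕ) + 1, hjX j⟩]
      congr 1
      simp only [eq_iff_iff, Fin.ext_iff]
      omega
    have hΨON : ∀ i j, ∑ y, Ψ i y * Ψ j y = if i = j then 1 else 0 := by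
      intro i j
      simp only [hΨ]
      rw [hbYon ⟨(i : ℕ) + 1, hjY i⟩ ⟨(j : ℕ) + 1, hjY j⟩]
      congr 1
      simp only [eq_iff_iff, Fin.ext_iff]
      omega
    set f : X → Fin k → ℝ := fun x j => Φ j x / u₀ x with hf
    set g : Y → Fin k → ℝ := fun y j => Ψ j y / v₀ y with hg
    have hfa : ∀ i, ∑ x, (∑ y, p x y) * f x i = 0 := by
      intro i
      calc ∑ x, (∑ y, p x y) * f x i = ∑ x, u₀ x * Φ i x := by
            refine Finset.sum_congr rfl fun x _ => ?_
            simp only [hf]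
            rw [← hu0sq x, mul_assoc, hcX x i]
        _ = 0 := hΦ0 i
    have hgb : ∀ i, ∑ y, (∑ x, p x y) * g y i = 0 := by
      intro i
      calc ∑ y, (∑ x, p x y) * g y i = ∑ y, v₀ y * Ψ i y := by
            refine Finset.sum_congr rfl fun y _ => ?_
            simp only [hg]
            rw [← hv0sq y, mul_assoc, hcY y i]
        _ = 0 := hΨ0 i
    have hfc : ∀ i j, (∑ x, (∑ y, p x y) * (f x i * f x j)) = if i = j then 1 else 0 := by
      intro i j
      calc ∑ x, (∑ y, p x y) * (f x i * f x j) = ∑ x, Φ i x * Φ j x := by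
            refine Finset.sum_congr rfl fun x _ => ?_
            simp only [hf]
            rw [← hu0sq x,
              show u₀ x * u₀ x * (Φ i x / u₀ x * (Φ j x / u₀ x))
                = (u₀ x * (Φ i x / u₀ x)) * (u₀ x * (Φ j x / u₀ x)) from by ring,
              hcX x i, hcX x j]
        _ = _ := hΦON i j
    have hgd : ∀ i j, (∑ y, (∑ x, p x y) * (g y i * g y j)) = if i = j then 1 else 0 := by
      intro i j
      calc ∑ y, (∑ x, p x y) * (g y i * g y j) = ∑ y, Ψ i y * Ψ j y := by
            refine Finset.sum_congr rfl fun y _ => ?_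
            simp only [hg]
            rw [← hv0sq y,
              show v₀ y * v₀ y * (Ψ i y / v₀ y * (Ψ j y / v₀ y))
                = (v₀ y * (Ψ i y / v₀ y)) * (v₀ y * (Ψ j y / v₀ y)) from by ring,
              hcY y i, hcY y j]
        _ = _ := hΨON i j
    refine ⟨f, g, hfa, hgb, hfc, hgd, ?_⟩
    rw [core f g hfa hgb]
    symm
    rw [filter_lt_eq_map hkN, Finset.sum_map]
    refine Finset.sum_congr rfl fun j _ => ?_
    simp only [Fin.castLEEmb_apply]
    have e1 : ∀ i : Fin N, (∑ x, u i x * (u₀ x * f x j)) = ∑ x, u i x * Φ j x := fun i =>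
      Finset.sum_congr rfl fun x _ => by simp only [hf]; rw [hcX x j]
    have e2 : ∀ i : Fin N, (∑ y, v i y * (v₀ y * g y j)) = ∑ y, v i y * Ψ j y := fun i =>
      Finset.sum_congr rfl fun y _ => by simp only [hg]; rw [hcY y j]
    calc ∑ i, σ i * ((∑ x, u i x * (u₀ x * f x j)) * (∑ y, v i y * (v₀ y * g y j)))
        = ∑ i, σ i * ((∑ x, u i x * Φ j x) * (∑ y, v i y * Ψ j y)) := by
          refine Finset.sum_congr rfl fun i _ => ?_
          rw [e1 i, e2 i]
      _ = σ (Fin.castLE hkN j) := ?_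
    by_cases hjm : (j : ℕ) < m
    · rw [show Φ j = u (Fin.castLE hkN j) from hbXi (j : ℕ) hjm (hjX j),
        show Ψ j = v (Fin.castLE hkN j) from hbYi (j : ℕ) hjm (hjY j)]
      rw [Finset.sum_eq_single (Fin.castLE hkN j)
        (fun i _ hne => by
          rw [hON_u i (Fin.castLE hkN j), hON_v i (Fin.castLE hkN j), if_neg hne]
          ring)
        (fun h => absurd (Finset.mem_univ _) h)]
      rw [hON_u (Fin.castLE hkN j) (Fin.castLE hkN j), hON_v (Fin.castLE hkN j) (Fin.castLE hkN j)]
      simp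
    · have hσj : σ (Fin.castLE hkN j) = 0 := hm_zero _ (by simpa using not_lt.1 hjm)
      rw [hσj]
      refine Finset.sum_eq_zero fun i _ => ?_
      by_cases hσi : σ i = 0
      · rw [hσi, zero_mul]
      · have him : (i : ℕ) < m := by
          by_contra hcon
          exact hσi (hm_zero i (not_lt.1 hcon))
        have hi1 : (i : ℕ) + 1 < Fintype.card X := by omega
        have hui : u i = bX ⟨(i : ℕ) + 1, hi1⟩ := by
          rw [hbXi (i : ℕ) him hi1]
        have hzero : ∑ x, u i x * Φ j x = 0 := by
          rw [hui]
          simp only [hΦ]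
          rw [hbXon ⟨(i : ℕ) + 1, hi1⟩ ⟨(j : ℕ) + 1, hjX j⟩]
          rw [if_neg (by simp only [Fin.ext_iff]; omega)]
        rw [hzero, zero_mul, mul_zero]
  · rintro r ⟨f, g, hf0, hg0, hff, hgg, hr⟩
    rw [hr, core f g hf0 hg0]
    have hFON : ∀ j j', (∑ x, (u₀ x * f x j) * (u₀ x * f x j')) = if j = j' then 1 else 0 :=
      fun j j' => by
        rw [← hff j j']
        exact Finset.sum_congr rfl fun x _ => by rw [← hu0sq x]; ring
    have hGON : ∀ j j', (∑ y, (v₀ y * g y j) * (v₀ y * g y j')) = if j = j' then 1 else 0 :=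
      fun j j' => by
        rw [← hgg j j']
        exact Finset.sum_congr rfl fun y _ => by rw [← hv0sq y]; ring
    refine kyfan_bound hkN σ hσ0 hσmono (fun i j => ∑ x, u i x * (u₀ x * f x j))
      (fun i j => ∑ y, v i y * (v₀ y * g y j)) ?_ ?_ ?_ ?_
    · intro i
      refine le_trans (bessel_sums (fun j x => u₀ x * f x j) hFON (u i)) ?_
      have e : ∑ x, (u i x) ^ 2 = ∑ x, u i x * u i x :=
        Finset.sum_congr rfl fun x _ => sq (u i x)
      rw [e, hON_u i i, if_pos rfl]
    · intro j
      calc ∑ i, (∑ x, u i x * (u₀ x * f x j)) ^ 2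
          = ∑ i, (∑ x, (u₀ x * f x j) * u i x) ^ 2 := by
            refine Finset.sum_congr rfl fun i _ => ?_
            rw [show (∑ x, u i x * (u₀ x * f x j)) = ∑ x, (u₀ x * f x j) * u i x from
              Finset.sum_congr rfl fun x _ => mul_comm _ _]
        _ ≤ ∑ x, (u₀ x * f x j) ^ 2 := bessel_sums u hON_u (fun x => u₀ x * f x j)
        _ ≤ 1 := by
            have e : ∑ x, (u₀ x * f x j) ^ 2 = ∑ x, (u₀ x * f x j) * (u₀ x * f x j) :=
              Finset.sum_congr rfl fun x _ => sq _
            rw [e, hFON j j, if_pos rfl]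
    · intro i
      refine le_trans (bessel_sums (fun j y => v₀ y * g y j) hGON (v i)) ?_
      have e : ∑ y, (v i y) ^ 2 = ∑ y, v i y * v i y :=
        Finset.sum_congr rfl fun y _ => sq (v i y)
      rw [e, hON_v i i, if_pos rfl]
    · intro j
      calc ∑ i, (∑ y, v i y * (v₀ y * g y j)) ^ 2
          = ∑ i, (∑ y, (v₀ y * g y j) * v i y) ^ 2 := by
            refine Finset.sum_congr rfl fun i _ => ?_
            rw [show (∑ y, v i y * (v₀ y * g y j)) = ∑ y, (v₀ y * g y j) * v i y from
              Finset.sum_congr rfl fun y _ => mul_comm _ _]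
        _ ≤ ∑ y, (v₀ y * g y j) ^ 2 := bessel_sums v hON_v (fun y => v₀ y * g y j)
        _ ≤ 1 := by
            have e : ∑ y, (v₀ y * g y j) ^ 2 = ∑ y, (v₀ y * g y j) * (v₀ y * g y j) :=
              Finset.sum_congr rfl fun y _ => sq _
            rw [e, hGON j j, if_pos rfl]
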